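/- Faà di Bruno difference estimate: For all n, d, k, l ∈ ℕ there is a constant C = C(n,d,k,l) > 0 such that the following holds. Let Ω ⊂ ℝ^d be open, g, h ∈ C^n(Ω; ℝ^k), and f ∈ C^n(ℝ^k; ℝ^l) such that f and all its derivatives up to order n are uniformly continuous; denote by ω_{D^s f} a modulus of continuity of D^s f. Then for every x ∈ Ω: |D^n(f∘(g+h))(x) − D^n(f∘g)(x)| ≤ C Σ_{s=1}^n Σ_{l₁,…,l_s ≥ 1, l₁+⋯+l_s = n} ω_{D^s f}(|h(x)|) Π_{j=1}^s |D^{l_j} g(x)| + C Σ_{s=1}^n Σ_{l₁,…,l_s ≥ 1, l₁+⋯+l_s = n} Σ_{m=1}^s |D^s f(g(x)+h(x))| Π_{j=1}^m |D^{l_j} h(x)| Π_{j=m+1}^s |D^{l_j} g(x)|. -/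

import Mathlib

noncomputable section

open Function Set

namespace FdBAux

variable {𝕜 : Type*} [NontriviallyNormedField 𝕜]
  {E F G : Type*} [NormedAddCommGroup E] [NormedSpace 𝕜 E]
  [NormedAddCommGroup F] [NormedSpace 𝕜 F] [NormedAddCommGroup G] [NormedSpace 𝕜 G]

lemma norm_compAlong {n : ℕ} (c : OrderedFinpartition n)
    (f : ContinuousMultilinearMap 𝕜 (fun _ : Fin c.length ↦ F) G)
    (p : ∀ i : Fin c.length, ContinuousMultilinearMap 𝕜 (fun _ : Fin (c.partSize i) ↦ E) F) :
    ‖c.compAlongOrderedFinpartition f p‖ ≤ ‖f‖ * ∏ i, ‖p i‖ := by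
  apply ContinuousMultilinearMap.opNorm_le_bound (by positivity) (fun v ↦ ?_)
  rw [OrderedFinpartition.compAlongOrderFinpartition_apply]
  apply (f.le_opNorm _).trans
  rw [mul_assoc, ← c.prod_sigma_eq_prod, ← Finset.prod_mul_distrib]
  gcongr with m _
  exact (p m).le_opNorm _

lemma sum_partSize {n : ℕ} (c : OrderedFinpartition n) : ∑ i, c.partSize i = n := by
  simpa using (Fintype.card_congr c.equivSigma)

def compOfFn {n N : ℕ} (b : Fin N → ℕ) (hpos : ∀ i, 0 < b i) (hsum : ∑ i, b i = n) :
    Composition n where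
  blocks := List.ofFn b
  blocks_pos := by
    intro a ha
    rw [List.mem_ofFn] at ha
    obtain ⟨i, rfl⟩ := ha
    exact hpos i
  blocks_sum := by rw [List.sum_ofFn, hsum]

lemma length_compOfFn {n N : ℕ} (b : Fin N → ℕ) (hpos : ∀ i, 0 < b i) (hsum : ∑ i, b i = n) :
    (compOfFn b hpos hsum).length = N := List.length_ofFn

lemma prod_compOfFn {n N : ℕ} (b : Fin N → ℕ) (hpos : ∀ i, 0 < b i) (hsum : ∑ i, b i = n)
    (f : ℕ → ℕ → ℝ) :
    ∏ j : Fin (compOfFn b hpos hsum).length, f j ((compOfFn b hpos hsum).blocksFun j)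
      = ∏ i : Fin N, f i (b i) := by
  apply Fintype.prod_equiv (finCongr (length_compOfFn b hpos hsum))
  intro j
  congr 1
  simp only [Composition.blocksFun, compOfFn, List.get_eq_getElem, List.getElem_ofFn]
  exact List.get_ofFn b j

lemma prodg_compOfFn {n N : ℕ} (b : Fin N → ℕ) (hpos : ∀ i, 0 < b i) (hsum : ∑ i, b i = n)
    (G : ℕ → ℝ) :
    ∏ j : Fin (compOfFn b hpos hsum).length, G ((compOfFn b hpos hsum).blocksFun j)
      = ∏ i : Fin N, G (b i) :=
  prod_compOfFn b hpos hsum (fun _ t ↦ G t)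

lemma prodite_compOfFn {n N : ℕ} (b : Fin N → ℕ) (hpos : ∀ i, 0 < b i) (hsum : ∑ i, b i = n)
    (m : ℕ) (H G : ℕ → ℝ) :
    (∏ j : Fin (compOfFn b hpos hsum).length,
        if (j : ℕ) < m then H ((compOfFn b hpos hsum).blocksFun j)
          else G ((compOfFn b hpos hsum).blocksFun j))
      = ∏ i : Fin N, (if (i : ℕ) < m then H (b i) else G (b i)) :=
  prod_compOfFn b hpos hsum (fun j t ↦ if j < m then H t else G t)

lemma exists_equiv_finset {N : ℕ} (S : Finset (Fin N)) :
    ∃ ρ : Fin N ≃ Fin N, ∀ j : Fin N, ρ j ∈ S ↔ (j : ℕ) < S.card := by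
  classical
  have hcard : S.card + Sᶜ.card = N := by
    simpa using S.card_add_card_compl
  let e3 := S.orderIsoOfFin rfl
  let e4 := (Sᶜ : Finset (Fin N)).orderIsoOfFin rfl
  let e4' : Fin (Sᶜ : Finset (Fin N)).card ≃ {x : Fin N // ¬ x ∈ S} :=
    e4.toEquiv.trans (Equiv.subtypeEquivRight (fun x ↦ Finset.mem_compl))
  let e5 : {x : Fin N // x ∈ S} ⊕ {x : Fin N // ¬ x ∈ S} ≃ Fin N := Equiv.sumCompl (· ∈ S)
  refine ⟨(finCongr hcard).symm.trans (finSumFinEquiv.symm.trans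
      ((e3.toEquiv.sumCongr e4').trans e5)), fun j ↦ ?_⟩
  rcases lt_or_ge (j : ℕ) S.card with hj | hj
  · have h1 : (finCongr hcard).symm j = Fin.castAdd (Sᶜ : Finset (Fin N)).card ⟨j, hj⟩ := by
      ext; rfl
    simp only [Equiv.trans_apply, h1, finSumFinEquiv_symm_apply_castAdd, Equiv.sumCongr_apply,
      Sum.map_inl, Equiv.sumCompl_apply_inl, e5]
    exact iff_of_true (by simpa using (e3 ⟨j, hj⟩).2) hj
  · have hj2 : (j : ℕ) - S.card < (Sᶜ : Finset (Fin N)).card := by omega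
    have h1 : (finCongr hcard).symm j = Fin.natAdd S.card ⟨(j : ℕ) - S.card, hj2⟩ := by
      ext; simp; omega
    simp only [Equiv.trans_apply, h1, finSumFinEquiv_symm_apply_natAdd, Equiv.sumCongr_apply,
      Sum.map_inr, Equiv.sumCompl_apply_inr, e5]
    constructor
    · intro hmem
      exact absurd hmem (e4' ⟨_, hj2⟩).2
    · omega

end FdBAux

open FdBAux

set_option maxHeartbeats 2000000 in
/-- **Faà di Bruno difference estimate.** For all `n, d, k, l ∈ ℕ` there is a constant
`C = C(n,d,k,l) > 0` such that for every open `Ω ⊂ ℝ^d`, all `g, h ∈ C^n(Ω; ℝ^k)` and every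
`f ∈ C^n(ℝ^k; ℝ^l)` whose derivatives `D^s f` up to order `n` admit moduli of continuity
`ω s` (nondecreasing, `ω s → 0` at `0⁺`), one has for every `x ∈ Ω`:
`|D^n(f∘(g+h))(x) − D^n(f∘g)(x)|
  ≤ C Σ_{s,(l_j)} ω_{D^s f}(|h(x)|) Π_j |D^{l_j} g(x)|
  + C Σ_{s,(l_j)} Σ_{m=1}^s |D^s f(g(x)+h(x))| Π_{j≤m} |D^{l_j} h(x)| Π_{j>m} |D^{l_j} g(x)|`.
Sums over `s` and ordered tuples `(l₁,…,l_s)` of positive integers with `l₁+⋯+l_s = n` are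
encoded as sums over `c : Composition n` (with `s = c.length`, `l_j = c.blocksFun j`). -/
theorem faa_di_bruno_difference_estimate
    (n d k l : ℕ) (hn : 0 < n) (hd : 0 < d) (hk : 0 < k) (hl : 0 < l) :
    ∃ C > (0 : ℝ), ∀ (Ω : Set (EuclideanSpace ℝ (Fin d))), IsOpen Ω →
      ∀ (g h : EuclideanSpace ℝ (Fin d) → EuclideanSpace ℝ (Fin k))
        (f : EuclideanSpace ℝ (Fin k) → EuclideanSpace ℝ (Fin l))
        (ω : ℕ → ℝ → ℝ),
        ContDiffOn ℝ n g Ω → ContDiffOn ℝ n h Ω → ContDiff ℝ n f →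
        (∀ s, Monotone (ω s)) →
        (∀ s, Filter.Tendsto (ω s) (nhdsWithin 0 (Set.Ioi 0)) (nhds 0)) →
        (∀ s ≤ n, ∀ a b : EuclideanSpace ℝ (Fin k),
          ‖iteratedFDeriv ℝ s f a - iteratedFDeriv ℝ s f b‖ ≤ ω s ‖a - b‖) →
        ∀ x ∈ Ω,
          ‖iteratedFDerivWithin ℝ n (f ∘ (g + h)) Ω x -
              iteratedFDerivWithin ℝ n (f ∘ g) Ω x‖ ≤
            C * (∑ c : Composition n, ω c.length ‖h x‖ *
                  ∏ j : Fin c.length, ‖iteratedFDerivWithin ℝ (c.blocksFun j) g Ω x‖) +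
            C * (∑ c : Composition n, ∑ m ∈ Finset.Icc 1 c.length,
                  ‖iteratedFDeriv ℝ c.length f (g x + h x)‖ *
                    ∏ j : Fin c.length,
                      (if (j : ℕ) < m then ‖iteratedFDerivWithin ℝ (c.blocksFun j) h Ω x‖
                        else ‖iteratedFDerivWithin ℝ (c.blocksFun j) g Ω x‖)) := by
  classical
  refine ⟨((Fintype.card (OrderedFinpartition n) * 2 ^ n : ℕ) : ℝ) + 1, by positivity, ?_⟩
  intro Ω hΩ g h f ω hg hh hf hmono _htend hω x hx
  have hu : UniqueDiffOn ℝ Ω := hΩ.uniqueDiffOn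
  have hωnn : ∀ s ≤ n, ∀ r : ℝ, 0 ≤ r → 0 ≤ ω s r := by
    intro s hs r hr
    have h0 : (0 : ℝ) ≤ ω s 0 := by simpa using hω s hs 0 0
    exact h0.trans (hmono s hr)
  set R1 : ℝ := ∑ c : Composition n, ω c.length ‖h x‖ *
      ∏ j : Fin c.length, ‖iteratedFDerivWithin ℝ (c.blocksFun j) g Ω x‖ with hR1def
  set R2 : ℝ := ∑ c : Composition n, ∑ m ∈ Finset.Icc 1 c.length,
      ‖iteratedFDeriv ℝ c.length f (g x + h x)‖ *
        ∏ j : Fin c.length,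
          (if (j : ℕ) < m then ‖iteratedFDerivWithin ℝ (c.blocksFun j) h Ω x‖
            else ‖iteratedFDerivWithin ℝ (c.blocksFun j) g Ω x‖) with hR2def
  have hR1nn : 0 ≤ R1 := by
    refine Finset.sum_nonneg fun c _ ↦ mul_nonneg
      (hωnn c.length c.length_le _ (norm_nonneg _))
      (Finset.prod_nonneg fun j _ ↦ norm_nonneg _)
  have hR2term : ∀ (c : Composition n) (m : ℕ),
      0 ≤ ‖iteratedFDeriv ℝ c.length f (g x + h x)‖ *
        ∏ j : Fin c.length,
          (if (j : ℕ) < m then ‖iteratedFDerivWithin ℝ (c.blocksFun j) h Ω x‖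
            else ‖iteratedFDerivWithin ℝ (c.blocksFun j) g Ω x‖) := by
    intro c m
    refine mul_nonneg (norm_nonneg _) (Finset.prod_nonneg fun j _ ↦ ?_)
    split <;> exact norm_nonneg _
  have hR2nn : 0 ≤ R2 :=
    Finset.sum_nonneg fun c _ ↦ Finset.sum_nonneg fun m _ ↦ hR2term c m
  -- Taylor series
  have hgh : ContDiffOn ℝ n (g + h) Ω := hg.add hh
  have Hg : HasFTaylorSeriesUpToOn n g (ftaylorSeriesWithin ℝ g Ω) Ω :=
    hg.ftaylorSeriesWithin hu
  have Hgh : HasFTaylorSeriesUpToOn n (g + h) (ftaylorSeriesWithin ℝ (g + h) Ω) Ω :=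
    hgh.ftaylorSeriesWithin hu
  have Hf : HasFTaylorSeriesUpToOn n f (ftaylorSeries ℝ f) univ := by
    rw [← ftaylorSeriesWithin_univ]
    exact (contDiffOn_univ.mpr hf).ftaylorSeriesWithin uniqueDiffOn_univ
  have E1 : iteratedFDerivWithin ℝ n (f ∘ g) Ω x
      = ∑ c : OrderedFinpartition n,
          (ftaylorSeries ℝ f (g x)).compAlongOrderedFinpartition
            (ftaylorSeriesWithin ℝ g Ω x) c :=
    ((Hf.comp Hg (mapsTo_univ _ _)).eq_iteratedFDerivWithin_of_uniqueDiffOn le_rfl hu hx).symm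
  have E2 : iteratedFDerivWithin ℝ n (f ∘ (g + h)) Ω x
      = ∑ c : OrderedFinpartition n,
          (ftaylorSeries ℝ f ((g + h) x)).compAlongOrderedFinpartition
            (ftaylorSeriesWithin ℝ (g + h) Ω x) c :=
    ((Hf.comp Hgh (mapsTo_univ _ _)).eq_iteratedFDerivWithin_of_uniqueDiffOn le_rfl hu hx).symm
  rw [E1, E2, ← Finset.sum_sub_distrib]
  -- per-partition bound
  have key : ∀ c : OrderedFinpartition n,
      ‖(ftaylorSeries ℝ f ((g + h) x)).compAlongOrderedFinpartition
          (ftaylorSeriesWithin ℝ (g + h) Ω x) c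
        - (ftaylorSeries ℝ f (g x)).compAlongOrderedFinpartition
            (ftaylorSeriesWithin ℝ g Ω x) c‖ ≤ R1 + 2 ^ n * R2 := by
    intro c
    set F₁ := iteratedFDeriv ℝ c.length f (g x + h x) with hF₁
    set F₂ := iteratedFDeriv ℝ c.length f (g x) with hF₂
    set Gm : ∀ i : Fin c.length,
        ContinuousMultilinearMap ℝ (fun _ : Fin (c.partSize i) ↦ EuclideanSpace ℝ (Fin d))
          (EuclideanSpace ℝ (Fin k)) :=
      fun i ↦ iteratedFDerivWithin ℝ (c.partSize i) g Ω x with hGm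
    set Hm : ∀ i : Fin c.length,
        ContinuousMultilinearMap ℝ (fun _ : Fin (c.partSize i) ↦ EuclideanSpace ℝ (Fin d))
          (EuclideanSpace ℝ (Fin k)) :=
      fun i ↦ iteratedFDerivWithin ℝ (c.partSize i) h Ω x with hHm
    have hGH : (fun i : Fin c.length ↦ ftaylorSeriesWithin ℝ (g + h) Ω x (c.partSize i))
        = Hm + Gm := by
      funext i
      have hle : ((c.partSize i : ℕ) : WithTop ℕ∞) ≤ (n : WithTop ℕ∞) := by
        exact_mod_cast c.partSize_le i
      show iteratedFDerivWithin ℝ (c.partSize i) (g + h) Ω x = _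
      rw [iteratedFDerivWithin_add_apply (hg.of_le hle x hx) (hh.of_le hle x hx) hu hx]
      simp only [Pi.add_apply, hGm, hHm]
      exact add_comm _ _
    have hdecomp :
        (ftaylorSeries ℝ f ((g + h) x)).compAlongOrderedFinpartition
            (ftaylorSeriesWithin ℝ (g + h) Ω x) c
          - (ftaylorSeries ℝ f (g x)).compAlongOrderedFinpartition
              (ftaylorSeriesWithin ℝ g Ω x) c
        = (∑ S ∈ Finset.univ.erase (∅ : Finset (Fin c.length)),
            c.compAlongOrderedFinpartition F₁ (S.piecewise Hm Gm))
          + c.compAlongOrderedFinpartition (F₁ - F₂) Gm := by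
      have h1 : (ftaylorSeries ℝ f ((g + h) x)).compAlongOrderedFinpartition
          (ftaylorSeriesWithin ℝ (g + h) Ω x) c
          = c.compAlongOrderedFinpartition F₁ (Hm + Gm) := by
        rw [show (ftaylorSeries ℝ f ((g + h) x)).compAlongOrderedFinpartition
            (ftaylorSeriesWithin ℝ (g + h) Ω x) c
            = c.compAlongOrderedFinpartition F₁
              (fun i ↦ ftaylorSeriesWithin ℝ (g + h) Ω x (c.partSize i)) from rfl, hGH]
      have h2 : c.compAlongOrderedFinpartition F₁ (Hm + Gm)
          = ∑ S : Finset (Fin c.length),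
              c.compAlongOrderedFinpartition F₁ (S.piecewise Hm Gm) :=
        (c.compAlongOrderedFinpartitionL ℝ (EuclideanSpace ℝ (Fin d)) (EuclideanSpace ℝ (Fin k)) (EuclideanSpace ℝ (Fin l)) F₁).toMultilinearMap.map_add_univ Hm Gm
      have h3 : (∑ S : Finset (Fin c.length),
              c.compAlongOrderedFinpartition F₁ (S.piecewise Hm Gm))
          = c.compAlongOrderedFinpartition F₁ Gm
            + ∑ S ∈ Finset.univ.erase (∅ : Finset (Fin c.length)),
                c.compAlongOrderedFinpartition F₁ (S.piecewise Hm Gm) := by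
        rw [← Finset.add_sum_erase _ _ (Finset.mem_univ (∅ : Finset (Fin c.length)))]
        simp
      have h4 : c.compAlongOrderedFinpartition (F₁ - F₂) Gm
          = c.compAlongOrderedFinpartition F₁ Gm - c.compAlongOrderedFinpartition F₂ Gm := by
        have := map_sub (c.compAlongOrderedFinpartitionL ℝ (EuclideanSpace ℝ (Fin d))
          (EuclideanSpace ℝ (Fin k)) (EuclideanSpace ℝ (Fin l))) F₁ F₂
        calc c.compAlongOrderedFinpartition (F₁ - F₂) Gm
            = (c.compAlongOrderedFinpartitionL ℝ (EuclideanSpace ℝ (Fin d)) (EuclideanSpace ℝ (Fin k)) (EuclideanSpace ℝ (Fin l)) (F₁ - F₂)) Gm := rfl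
          _ = ((c.compAlongOrderedFinpartitionL ℝ (EuclideanSpace ℝ (Fin d)) (EuclideanSpace ℝ (Fin k)) (EuclideanSpace ℝ (Fin l)) F₁)
                - (c.compAlongOrderedFinpartitionL ℝ (EuclideanSpace ℝ (Fin d)) (EuclideanSpace ℝ (Fin k)) (EuclideanSpace ℝ (Fin l)) F₂)) Gm := by rw [this]
          _ = _ := by
              rw [ContinuousMultilinearMap.sub_apply]
              rfl
      have h5 : (ftaylorSeries ℝ f (g x)).compAlongOrderedFinpartition
          (ftaylorSeriesWithin ℝ g Ω x) c = c.compAlongOrderedFinpartition F₂ Gm := rfl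
      rw [h1, h2, h3, h4, h5]
      abel
    rw [hdecomp]
    have bound1 : ‖c.compAlongOrderedFinpartition (F₁ - F₂) Gm‖ ≤ R1 := by
      have hsub : ‖F₁ - F₂‖ ≤ ω c.length ‖h x‖ := by
        have := hω c.length c.length_le (g x + h x) (g x)
        rwa [add_sub_cancel_left] at this
      have hprodnn : (0 : ℝ) ≤ ∏ i, ‖Gm i‖ :=
        Finset.prod_nonneg fun i _ ↦ norm_nonneg _
      calc ‖c.compAlongOrderedFinpartition (F₁ - F₂) Gm‖
          ≤ ‖F₁ - F₂‖ * ∏ i, ‖Gm i‖ := norm_compAlong c _ _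
        _ ≤ ω c.length ‖h x‖ * ∏ i, ‖Gm i‖ := mul_le_mul_of_nonneg_right hsub hprodnn
        _ ≤ R1 := by
            have heq : ω c.length ‖h x‖ * ∏ i, ‖Gm i‖
                = ω (compOfFn c.partSize c.partSize_pos (sum_partSize c)).length ‖h x‖
                  * ∏ j : Fin (compOfFn c.partSize c.partSize_pos (sum_partSize c)).length,
                      ‖iteratedFDerivWithin ℝ
                        ((compOfFn c.partSize c.partSize_pos (sum_partSize c)).blocksFun j)
                        g Ω x‖ := by
              rw [prodg_compOfFn c.partSize c.partSize_pos (sum_partSize c)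
                  (fun t ↦ ‖iteratedFDerivWithin ℝ t g Ω x‖), length_compOfFn]
            rw [heq, hR1def]
            refine Finset.single_le_sum (f := fun c' : Composition n ↦
              ω c'.length ‖h x‖ * ∏ j : Fin c'.length,
                ‖iteratedFDerivWithin ℝ (c'.blocksFun j) g Ω x‖)
              (fun c' _ ↦ mul_nonneg (hωnn c'.length c'.length_le _ (norm_nonneg _))
                (Finset.prod_nonneg fun j _ ↦ norm_nonneg _))
              (Finset.mem_univ _)
    have bound2 : ‖∑ S ∈ Finset.univ.erase (∅ : Finset (Fin c.length)),
        c.compAlongOrderedFinpartition F₁ (S.piecewise Hm Gm)‖ ≤ 2 ^ n * R2 := by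
      refine (norm_sum_le _ _).trans ?_
      have per : ∀ S ∈ Finset.univ.erase (∅ : Finset (Fin c.length)),
          ‖c.compAlongOrderedFinpartition F₁ (S.piecewise Hm Gm)‖ ≤ R2 := by
        intro S hS
        have hSne : S ≠ ∅ := Finset.ne_of_mem_erase hS
        have hm1 : 1 ≤ S.card := Finset.card_pos.mpr (Finset.nonempty_iff_ne_empty.mpr hSne)
        obtain ⟨ρ, hρ⟩ := exists_equiv_finset S
        have hsum' : ∑ i, c.partSize (ρ i) = n := by
          rw [Equiv.sum_comp ρ c.partSize]; exact sum_partSize c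
        have hlen2 : (compOfFn (fun i ↦ c.partSize (ρ i))
            (fun i ↦ c.partSize_pos _) hsum').length = c.length :=
          length_compOfFn _ _ _
        have hterm : ‖iteratedFDeriv ℝ (compOfFn (fun i ↦ c.partSize (ρ i))
              (fun i ↦ c.partSize_pos _) hsum').length f (g x + h x)‖
            * ∏ j : Fin (compOfFn (fun i ↦ c.partSize (ρ i))
                (fun i ↦ c.partSize_pos _) hsum').length,
                (if (j : ℕ) < S.card
                  then ‖iteratedFDerivWithin ℝ ((compOfFn (fun i ↦ c.partSize (ρ i))
                    (fun i ↦ c.partSize_pos _) hsum').blocksFun j) h Ω x‖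
                  else ‖iteratedFDerivWithin ℝ ((compOfFn (fun i ↦ c.partSize (ρ i))
                    (fun i ↦ c.partSize_pos _) hsum').blocksFun j) g Ω x‖)
            = ‖F₁‖ * ∏ i : Fin c.length, (if i ∈ S then ‖Hm i‖ else ‖Gm i‖) := by
          congr 1
          · rw [hlen2]
          · rw [prodite_compOfFn (fun i ↦ c.partSize (ρ i)) (fun i ↦ c.partSize_pos _) hsum'
              S.card (fun t ↦ ‖iteratedFDerivWithin ℝ t h Ω x‖)
              (fun t ↦ ‖iteratedFDerivWithin ℝ t g Ω x‖)]
            rw [← Equiv.prod_comp ρ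
              (fun i ↦ if i ∈ S then ‖Hm i‖ else ‖Gm i‖)]
            refine Finset.prod_congr rfl fun i _ ↦ ?_
            rw [if_congr (Iff.symm (hρ i)) rfl rfl]
        have hmem : S.card ∈ Finset.Icc 1 (compOfFn (fun i ↦ c.partSize (ρ i))
            (fun i ↦ c.partSize_pos _) hsum').length := by
          rw [Finset.mem_Icc, hlen2]
          exact ⟨hm1, by simpa using Finset.card_le_univ S⟩
        have step1 : ‖F₁‖ * ∏ i : Fin c.length, (if i ∈ S then ‖Hm i‖ else ‖Gm i‖)
            ≤ ∑ m ∈ Finset.Icc 1 (compOfFn (fun i ↦ c.partSize (ρ i))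
                (fun i ↦ c.partSize_pos _) hsum').length,
              ‖iteratedFDeriv ℝ (compOfFn (fun i ↦ c.partSize (ρ i))
                (fun i ↦ c.partSize_pos _) hsum').length f (g x + h x)‖ *
                ∏ j : Fin (compOfFn (fun i ↦ c.partSize (ρ i))
                    (fun i ↦ c.partSize_pos _) hsum').length,
                  (if (j : ℕ) < m
                    then ‖iteratedFDerivWithin ℝ ((compOfFn (fun i ↦ c.partSize (ρ i))
                      (fun i ↦ c.partSize_pos _) hsum').blocksFun j) h Ω x‖
                    else ‖iteratedFDerivWithin ℝ ((compOfFn (fun i ↦ c.partSize (ρ i))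
                      (fun i ↦ c.partSize_pos _) hsum').blocksFun j) g Ω x‖) := by
          rw [← hterm]
          exact Finset.single_le_sum (fun m _ ↦ hR2term _ m) hmem
        have step2 : (∑ m ∈ Finset.Icc 1 (compOfFn (fun i ↦ c.partSize (ρ i))
                (fun i ↦ c.partSize_pos _) hsum').length,
              ‖iteratedFDeriv ℝ (compOfFn (fun i ↦ c.partSize (ρ i))
                (fun i ↦ c.partSize_pos _) hsum').length f (g x + h x)‖ *
                ∏ j : Fin (compOfFn (fun i ↦ c.partSize (ρ i))
                    (fun i ↦ c.partSize_pos _) hsum').length,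
                  (if (j : ℕ) < m
                    then ‖iteratedFDerivWithin ℝ ((compOfFn (fun i ↦ c.partSize (ρ i))
                      (fun i ↦ c.partSize_pos _) hsum').blocksFun j) h Ω x‖
                    else ‖iteratedFDerivWithin ℝ ((compOfFn (fun i ↦ c.partSize (ρ i))
                      (fun i ↦ c.partSize_pos _) hsum').blocksFun j) g Ω x‖)) ≤ R2 := by
          rw [hR2def]
          exact Finset.single_le_sum (f := fun c' : Composition n ↦
              ∑ m ∈ Finset.Icc 1 c'.length,
                ‖iteratedFDeriv ℝ c'.length f (g x + h x)‖ *
                  ∏ j : Fin c'.length,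
                    (if (j : ℕ) < m then ‖iteratedFDerivWithin ℝ (c'.blocksFun j) h Ω x‖
                      else ‖iteratedFDerivWithin ℝ (c'.blocksFun j) g Ω x‖))
            (fun c' _ ↦ Finset.sum_nonneg fun m _ ↦ hR2term c' m) (Finset.mem_univ _)
        calc ‖c.compAlongOrderedFinpartition F₁ (S.piecewise Hm Gm)‖
            ≤ ‖F₁‖ * ∏ i, ‖S.piecewise Hm Gm i‖ := norm_compAlong c _ _
          _ = ‖F₁‖ * ∏ i : Fin c.length, (if i ∈ S then ‖Hm i‖ else ‖Gm i‖) := by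
              congr 1
              refine Finset.prod_congr rfl fun i _ ↦ ?_
              by_cases hi : i ∈ S <;> simp [Finset.piecewise, hi]
          _ ≤ R2 := step1.trans step2
      calc (∑ S ∈ Finset.univ.erase (∅ : Finset (Fin c.length)),
              ‖c.compAlongOrderedFinpartition F₁ (S.piecewise Hm Gm)‖)
          ≤ ∑ _S ∈ Finset.univ.erase (∅ : Finset (Fin c.length)), R2 :=
            Finset.sum_le_sum per
        _ = ((Finset.univ.erase (∅ : Finset (Fin c.length))).card : ℝ) * R2 := by
            rw [Finset.sum_const, nsmul_eq_mul]
        _ ≤ 2 ^ n * R2 := by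
            refine mul_le_mul_of_nonneg_right ?_ hR2nn
            have h1 : (Finset.univ.erase (∅ : Finset (Fin c.length))).card ≤ 2 ^ n := by
              calc (Finset.univ.erase (∅ : Finset (Fin c.length))).card
                  ≤ (Finset.univ : Finset (Finset (Fin c.length))).card :=
                    Finset.card_le_card (Finset.erase_subset _ _)
                _ = Fintype.card (Finset (Fin c.length)) := Finset.card_univ
                _ = 2 ^ Fintype.card (Fin c.length) := Fintype.card_finset
                _ = 2 ^ c.length := by rw [Fintype.card_fin]
                _ ≤ 2 ^ n := Nat.pow_le_pow_right (by norm_num) c.length_le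
            exact_mod_cast h1
    refine (norm_add_le _ _).trans ?_
    linarith [add_le_add bound2 bound1]
  calc ‖∑ c : OrderedFinpartition n,
          ((ftaylorSeries ℝ f ((g + h) x)).compAlongOrderedFinpartition
            (ftaylorSeriesWithin ℝ (g + h) Ω x) c
          - (ftaylorSeries ℝ f (g x)).compAlongOrderedFinpartition
              (ftaylorSeriesWithin ℝ g Ω x) c)‖
      ≤ ∑ c : OrderedFinpartition n,
          ‖(ftaylorSeries ℝ f ((g + h) x)).compAlongOrderedFinpartition
            (ftaylorSeriesWithin ℝ (g + h) Ω x) c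
          - (ftaylorSeries ℝ f (g x)).compAlongOrderedFinpartition
              (ftaylorSeriesWithin ℝ g Ω x) c‖ := norm_sum_le _ _
    _ ≤ ∑ _c : OrderedFinpartition n, (R1 + 2 ^ n * R2) :=
        Finset.sum_le_sum fun c _ ↦ key c
    _ = (Fintype.card (OrderedFinpartition n) : ℝ) * (R1 + 2 ^ n * R2) := by
        rw [Finset.sum_const, Finset.card_univ, nsmul_eq_mul]
    _ ≤ (((Fintype.card (OrderedFinpartition n) * 2 ^ n : ℕ) : ℝ) + 1) * R1
        + (((Fintype.card (OrderedFinpartition n) * 2 ^ n : ℕ) : ℝ) + 1) * R2 := by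
        push_cast
        have h1 : (1 : ℝ) ≤ 2 ^ n := one_le_pow₀ (by norm_num : (1:ℝ) ≤ 2)
        have h2 : (0 : ℝ) ≤ (Fintype.card (OrderedFinpartition n) : ℝ) := by positivity
        nlinarith [mul_nonneg h2 hR1nn, mul_nonneg h2 hR2nn]
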